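/- Let p, q ≥ 1 and let B be the adjacency matrix of (K_{p,q},+), i.e. the block matrix [[0_p, J_{p×q}],[J_{q×p}, 0_q]] with J denoting all-ones blocks. For every real t with t ≠ 0 and t² ≠ pq, the matrix tI_{p+q} − B is invertible and the coronal of B at t equals χ_B(t) = ((p+q)t + 2pq)/(t² − pq). -/

import Mathlib

open Matrix BigOperators

/-- The coronal of a matrix `B` at `t`: `jᵀ (tI − B)⁻¹ j`, where `j` is the all-ones vector. -/
noncomputable def coronal {V : Type*} [Fintype V] [DecidableEq V]
    (B : Matrix V V ℝ) (t : ℝ) : ℝ :=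
  dotProduct (fun _ => 1) (((t • (1 : Matrix V V ℝ) - B)⁻¹).mulVec fun _ => 1)

/-- The adjacency matrix of `(K_{p,q}, +)`, the all-positive complete bipartite signed graph:
the block matrix `[[0, J], [J, 0]]`. -/
def posKpq (p q : ℕ) : Matrix (Fin p ⊕ Fin q) (Fin p ⊕ Fin q) ℝ :=
  Matrix.fromBlocks 0 (Matrix.of fun _ _ => 1) (Matrix.of fun _ _ => 1) 0

noncomputable def kpqInv (p q : ℕ) (t : ℝ) :
    Matrix (Fin p ⊕ Fin q) (Fin p ⊕ Fin q) ℝ :=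
  fun i j => (if i = j then 1/t else 0) +
    (Sum.elim (fun _ => Sum.elim (fun _ => (q : ℝ)/(t*(t^2 - p*q))) (fun _ => 1/(t^2 - p*q)))
      (fun _ => Sum.elim (fun _ => 1/(t^2 - p*q)) (fun _ => (p : ℝ)/(t*(t^2 - p*q)))) i) j

theorem coronal_posKpq {p q : ℕ} (hp : 1 ≤ p) (hq : 1 ≤ q) (t : ℝ)
    (ht : t ≠ 0) (ht2 : t ^ 2 ≠ (p : ℝ) * q) :
    IsUnit (t • (1 : Matrix (Fin p ⊕ Fin q) (Fin p ⊕ Fin q) ℝ) - posKpq p q).det ∧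
    coronal (posKpq p q) t = (((p : ℝ) + q) * t + 2 * p * q) / (t ^ 2 - p * q) := by
  have hs : t ^ 2 - (p : ℝ) * q ≠ 0 := sub_ne_zero.mpr ht2
  have hmul : (t • (1 : Matrix (Fin p ⊕ Fin q) (Fin p ⊕ Fin q) ℝ) - posKpq p q) *
      kpqInv p q t = 1 := by
    ext i j
    rcases i with i | i <;> rcases j with j | j <;>
      simp [Matrix.mul_apply, posKpq, kpqInv, Fintype.sum_sum_type, Matrix.one_apply,
        mul_add, Finset.sum_add_distrib, Finset.sum_ite_eq, Finset.mul_sum, sub_mul,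
        apply_ite] <;>
      (try field_simp) <;> (try split_ifs) <;> (try field_simp) <;> ring
  constructor
  · exact Matrix.isUnit_det_of_right_inverse hmul
  · have hinv : (t • (1 : Matrix (Fin p ⊕ Fin q) (Fin p ⊕ Fin q) ℝ) - posKpq p q)⁻¹ =
      kpqInv p q t := Matrix.inv_eq_right_inv hmul
    rw [coronal, hinv]
    simp [dotProduct, Matrix.mulVec, kpqInv, Fintype.sum_sum_type,
      Finset.sum_add_distrib, Finset.sum_ite_eq]
    field_simp
    ring
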